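/- Let k ≥ 3 and let G be the complement of the odd cycle C_{2k+1}, with vertices x_0,…,x_{2k} labeled so that x_i and x_j are adjacent in G if and only if j − i ≢ ±1 (mod 2k+1). Fix i, and let G' be the graph obtained from G by deleting the two (non-adjacent) vertices x_i and x_{i+1} and deleting the edge x_{i−1}x_{i+2} (indices modulo 2k+1). Then G' is isomorphic to the complement of the odd cycle C_{2k−1}; indeed G' is the complement of the cycle (x_0,…,x_{i−1}, x_{i+2},…,x_{2k}, x_0). -/

import Mathlib

open SimpleGraph

private lemma sub_val' {n : ℕ} (a b : Fin n) :
    (b.val ≤ a.val ∧ (a - b).val = a.val - b.val) ∨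
    (a.val < b.val ∧ (a - b).val = n + a.val - b.val) := by
  have ha := a.isLt
  have hb := b.isLt
  rw [Fin.sub_def]
  rcases Nat.lt_or_ge a.val b.val with h | h
  · right
    refine ⟨h, ?_⟩
    simp only []
    rw [Nat.mod_eq_of_lt (by omega)]
    omega
  · left
    refine ⟨h, ?_⟩
    simp only []
    have : n - b.val + a.val = n + (a.val - b.val) := by omega
    rw [this, Nat.add_mod_left, Nat.mod_eq_of_lt (by omega)]

private lemma adj_val {n : ℕ} (a b : Fin n) :
    (cycleGraph n).Adj a b ↔
      (a.val = b.val + 1 ∨ b.val = a.val + 1 ∨ a.val + (n-1) = b.val ∨ b.val + (n-1) = a.val)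
      ∧ a.val ≠ b.val := by
  have ha := a.isLt
  have hb := b.isLt
  rw [SimpleGraph.cycleGraph_adj']
  rcases sub_val' a b with ⟨h1, h2⟩ | ⟨h1, h2⟩ <;> rcases sub_val' b a with ⟨g1, g2⟩ | ⟨g1, g2⟩ <;>
    rw [h2, g2] <;> omega

private lemma addmod (n x y : ℕ) (hx : x < n) (hy : y < n) :
    (x + y < n ∧ (x + y) % n = x + y) ∨ (n ≤ x + y ∧ (x + y) % n = x + y - n) := by
  rcases Nat.lt_or_ge (x + y) n with h | h
  · exact Or.inl ⟨h, Nat.mod_eq_of_lt h⟩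
  · refine Or.inr ⟨h, ?_⟩
    rw [Nat.mod_eq_sub_mod h, Nat.mod_eq_of_lt (by omega)]

theorem stmt_2 (k : ℕ) (hk : 3 ≤ k) (i : Fin (2*k+1)) :
    Nonempty
      (((((cycleGraph (2*k+1))ᶜ).deleteEdges {s(i - 1, i + 2)}).induce
          {v : Fin (2*k+1) | v ≠ i ∧ v ≠ i + 1}) ≃g (cycleGraph (2*k-1))ᶜ) := by
  have hn7 : 7 ≤ 2*k+1 := by omega
  have h1v : (1 : Fin (2*k+1)).val = 1 := by
    have h : (1 : Fin (2*k+1)).val = 1 % (2*k+1) := rfl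
    rw [Nat.mod_eq_of_lt (by omega)] at h
    exact h
  have h2v : (2 : Fin (2*k+1)).val = 2 := by
    have h : (2 : Fin (2*k+1)).val = 2 % (2*k+1) := rfl
    rw [Nat.mod_eq_of_lt (by omega)] at h
    exact h
  have hivlt : i.val < 2*k+1 := i.isLt
  have hp1 : (i + 1).val = (i.val + 1) % (2*k+1) := by
    rw [Fin.add_def, h1v]
  have hp2 : (i + 2).val = (i.val + 2) % (2*k+1) := by
    rw [Fin.add_def, h2v]
  have hp1d : (i.val + 1 = 2*k+1 ∧ (i+1).val = 0) ∨
      (i.val + 1 < 2*k+1 ∧ (i+1).val = i.val + 1) := by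
    rcases addmod (2*k+1) i.val 1 hivlt (by omega) with ⟨h, h'⟩ | ⟨h, h'⟩
    · right; rw [hp1, h']; omega
    · left; rw [hp1, h']; omega
  have hp2d : (i.val + 2 = 2*k+1 ∧ (i+2).val = 0) ∨ (i.val + 2 = 2*k+2 ∧ (i+2).val = 1) ∨
      (i.val + 2 < 2*k+1 ∧ (i+2).val = i.val + 2) := by
    rcases addmod (2*k+1) i.val 2 hivlt (by omega) with ⟨h, h'⟩ | ⟨h, h'⟩
    · right; right; rw [hp2, h']; omega
    · rw [hp2, h']
      rcases Nat.lt_or_ge (i.val + 2) (2*k+2) with h2 | h2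
      · left; omega
      · right; left; omega
  have hm1d := sub_val' i (1 : Fin (2*k+1))
  rw [h1v] at hm1d
  have hbound : ∀ v : Fin (2*k+1), v ≠ i → v ≠ i + 1 → (v - (i+2)).val < 2*k-1 := by
    intro v hvi hvi1
    have hv := v.isLt
    have hvv : v.val ≠ i.val := fun h => hvi (Fin.ext h)
    have hvv1 : v.val ≠ (i+1).val := fun h => hvi1 (Fin.ext h)
    rcases sub_val' v (i+2) with ⟨h1, h2⟩ | ⟨h1, h2⟩ <;> omega
  have hinvmem : ∀ w : Fin (2*k-1),
      ((⟨w.val, by omega⟩ : Fin (2*k+1)) + (i+2)) ≠ i ∧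
      ((⟨w.val, by omega⟩ : Fin (2*k+1)) + (i+2)) ≠ i + 1 := by
    intro w
    have hw := w.isLt
    have hadd : ((⟨w.val, by omega⟩ : Fin (2*k+1)) + (i+2)).val
        = (w.val + (i+2).val) % (2*k+1) := by
      rw [Fin.add_def]
    constructor <;> intro heq <;> have hval := congrArg Fin.val heq <;>
      rw [hadd] at hval <;>
      rcases addmod (2*k+1) w.val (i+2).val (by omega) (i+2).isLt with ⟨h, h'⟩ | ⟨h, h'⟩ <;>
      rw [h'] at hval <;> omega
  refine ⟨⟨⟨fun v => ⟨(v.1 - (i+2)).val, hbound v.1 v.2.1 v.2.2⟩,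
      fun w => ⟨(⟨w.val, by omega⟩ : Fin (2*k+1)) + (i+2), (hinvmem w).1, (hinvmem w).2⟩,
      ?_, ?_⟩, ?_⟩⟩
  · intro v
    apply Subtype.ext
    show (v.1 - (i+2)) + (i+2) = v.1
    exact sub_add_cancel _ _
  · intro w
    apply Fin.ext
    show (((⟨w.val, by omega⟩ : Fin (2*k+1)) + (i+2)) - (i+2)).val = w.val
    rw [add_sub_cancel_right]
  · intro a b
    have hxb := hbound a.1 a.2.1 a.2.2
    have hyb := hbound b.1 b.2.1 b.2.2
    have key1 : ∀ u v : Fin (2*k+1), u = v ↔ (u - (i+2)).val = (v - (i+2)).val := by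
      intro u v
      constructor
      · rintro rfl; rfl
      · intro h
        have h2 : u - (i+2) = v - (i+2) := Fin.ext h
        have h3 := congrArg (· + (i+2)) h2
        simpa [sub_add_cancel] using h3
    have key2 : ∀ u v : Fin (2*k+1), (cycleGraph (2*k+1)).Adj u v ↔
        (((u - (i+2)).val = (v - (i+2)).val + 1 ∨ (v - (i+2)).val = (u - (i+2)).val + 1 ∨
         (u - (i+2)).val + (2*k+1-1) = (v - (i+2)).val ∨
         (v - (i+2)).val + (2*k+1-1) = (u - (i+2)).val)
        ∧ (u - (i+2)).val ≠ (v - (i+2)).val) := by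
      intro u v
      rw [← adj_val, cycleGraph_adj', cycleGraph_adj', sub_sub_sub_cancel_right,
        sub_sub_sub_cancel_right]
    have h3v : (3 : Fin (2*k+1)).val = 3 := by
      have h : (3 : Fin (2*k+1)).val = 3 % (2*k+1) := rfl
      rw [Nat.mod_eq_of_lt (by omega)] at h
      exact h
    have hneg3 : (-3 : Fin (2*k+1)) = ⟨2*k-2, by omega⟩ := by
      have h0 : ((3 : Fin (2*k+1)) + ⟨2*k-2, by omega⟩) = 0 := by
        apply Fin.ext
        rw [Fin.add_def, h3v]
        show (3 + (2*k-2)) % (2*k+1) = (0 : Fin (2*k+1)).val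
        have he : 3 + (2*k-2) = 2*k+1 := by omega
        rw [he, Nat.mod_self, Fin.val_zero]
      exact neg_eq_of_add_eq_zero_right h0
    have hring : i - 1 - (i+2) = (-3 : Fin (2*k+1)) := by open Fin.CommRing in ring
    have hm2 : (i - 1 - (i+2)).val = 2*k-2 := by rw [hring, hneg3]
    have hz : ((i+2) - (i+2)).val = 0 := by rw [sub_self]; rfl
    show (cycleGraph (2*k-1))ᶜ.Adj _ _ ↔
      (((cycleGraph (2*k+1))ᶜ).deleteEdges {s(i - 1, i + 2)}).Adj a.1 b.1
    simp only [compl_adj, deleteEdges_adj, adj_val (n := 2*k-1), key2, key1, Fin.mk.injEq,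
      Set.mem_singleton_iff, Sym2.eq, Sym2.rel_iff', Prod.mk.injEq, Prod.swap_prod_mk, ne_eq,
      hm2, hz, Equiv.coe_fn_mk]
    omega
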